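/- Let p be an odd prime and R a commutative ring of characteristic 2. For i = 0,1,2 let Q_i be quadratic residue circulant matrices Q_p(a_i,b_i,c_i) and A_i be p×p circulant matrices over R, and let M be the 3p×6p block matrix with block rows (Q_0 Q_1 Q_2 | A_0 A_1 A_2), (Q_2 Q_0 Q_1 | A_2 A_0 A_1), (Q_1 Q_2 Q_0 | A_1 A_2 A_0). Then M has full rank — i.e., there exists a 6p×3p matrix N over R with M·N = I_{3p} — if and only if there exist p×p circulant matrices C_0, C_1, C_2, D_0, D_1, D_2 over R such that: (1) Σ_{i=0}^{2} (Q_i C_i + A_i D_i) = I_p, (2) Σ_{i=0}^{2} (Q_i C_{[i+2]_3} + A_i D_{[i+2]_3}) = 0_p, and (3) Σ_{i=0}^{2} (Q_i C_{[i+1]_3} + A_i D_{[i+1]_3}) = 0_p. -/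

import Mathlib

open Matrix
open scoped Classical

/-- The quadratic residue circulant matrix `Q_p(a,b,c)`: the `p × p` matrix over `R`,
indexed by `ZMod p`, whose `(i,j)` entry is `a` if `i = j`, `b` if `j - i` is a
nonzero quadratic residue modulo `p`, and `c` otherwise. -/
noncomputable def Qmat (p : ℕ) {R : Type*} [CommRing R] (a b c : R) :
    Matrix (ZMod p) (ZMod p) R :=
  Matrix.of fun i j => if i = j then a else if IsSquare (j - i) then b else c

/-- The `3×3` block circulant matrix `CIRC(B 0, B 1, B 2)` whose block rows are
`(B 0, B 1, B 2)`, `(B 2, B 0, B 1)`, `(B 1, B 2, B 0)`. -/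
def blockCirc {R n : Type*} (B : ZMod 3 → Matrix n n R) :
    Matrix (ZMod 3 × n) (ZMod 3 × n) R :=
  Matrix.of fun ix jy => B (jy.1 - ix.1) ix.2 jy.2

/-- The `3p × 6p` block matrix with block rows `(Q 0, Q 1, Q 2 | A 0, A 1, A 2)`,
`(Q 2, Q 0, Q 1 | A 2, A 0, A 1)`, `(Q 1, Q 2, Q 0 | A 1, A 2, A 0)`. -/
def Mblk {R n : Type*} (Q A : ZMod 3 → Matrix n n R) :
    Matrix (ZMod 3 × n) ((ZMod 3 × n) ⊕ (ZMod 3 × n)) R :=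
  Matrix.fromCols (blockCirc Q) (blockCirc A)

section Aux
variable {R : Type*} [CommRing R] {p : ℕ} [NeZero p]

set_option linter.unusedSectionVars false

lemma Qmat_shift (a b c : R) (g i j : ZMod p) :
    Qmat p a b c (i + g) (j + g) = Qmat p a b c i j := by
  simp only [Qmat, of_apply, add_sub_add_right_eq_sub, add_left_inj]
  split_ifs <;> rfl

lemma circulant_shift (v : ZMod p → R) (g i j : ZMod p) :
    Matrix.circulant v (i + g) (j + g) = Matrix.circulant v i j := by
  simp [Matrix.circulant_apply, add_sub_add_right_eq_sub]

lemma blockCirc_mul {n : Type*} [Fintype n] (B C : ZMod 3 → Matrix n n R) :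
    blockCirc B * blockCirc C = blockCirc (fun d => ∑ i : ZMod 3, B i * C (d - i)) := by
  ext ⟨i1, i2⟩ ⟨j1, j2⟩
  simp only [blockCirc, of_apply, mul_apply, Fintype.sum_prod_type, Matrix.sum_apply]
  refine (Fintype.sum_equiv (Equiv.addLeft i1) _ _ fun k => ?_).symm
  simp only [mul_apply, Equiv.coe_addLeft, add_sub_cancel_left, sub_add_eq_sub_sub]

lemma blockCirc_add {n : Type*} (B C : ZMod 3 → Matrix n n R) :
    blockCirc B + blockCirc C = blockCirc (fun d => B d + C d) := by
  ext ⟨i1, i2⟩ ⟨j1, j2⟩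
  rfl

lemma blockCirc_one {n : Type*} [DecidableEq n] :
    blockCirc (fun d => if d = 0 then (1 : Matrix n n R) else 0) = 1 := by
  ext ⟨i1, i2⟩ ⟨j1, j2⟩
  simp only [blockCirc, of_apply]
  by_cases h : j1 - i1 = 0
  · rw [if_pos h]
    have hij : i1 = j1 := by rw [sub_eq_zero] at h; exact h.symm
    subst hij
    simp [Matrix.one_apply, Prod.ext_iff]
  · rw [if_neg h]
    have h' : ¬ i1 = j1 := fun e => h (by rw [e, sub_self])
    simp [Matrix.one_apply, Prod.ext_iff, h']

lemma blockCirc_ext {n : Type*} {B C : ZMod 3 → Matrix n n R}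
    (h : blockCirc B = blockCirc C) : B = C := by
  funext d
  ext x y
  have := congrFun (congrFun h ((0 : ZMod 3), x)) (d, y)
  simpa [blockCirc] using this

end Aux

theorem stmt8 {R : Type*} [CommRing R] [CharP R 2] (p : ℕ) [Fact (Nat.Prime p)]
    (hodd : Odd p) (a b c : ZMod 3 → R)
    (A : ZMod 3 → Matrix (ZMod p) (ZMod p) R)
    (hA : ∀ i, ∃ v : ZMod p → R, A i = Matrix.circulant v) :
    (∃ N : Matrix ((ZMod 3 × ZMod p) ⊕ (ZMod 3 × ZMod p)) (ZMod 3 × ZMod p) R,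
        Mblk (fun i => Qmat p (a i) (b i) (c i)) A * N = 1) ↔
      (∃ u w : ZMod 3 → ZMod p → R,
        ∑ i : ZMod 3, (Qmat p (a i) (b i) (c i) * Matrix.circulant (u i) +
          A i * Matrix.circulant (w i)) = (1 : Matrix (ZMod p) (ZMod p) R) ∧
        ∑ i : ZMod 3, (Qmat p (a i) (b i) (c i) * Matrix.circulant (u (i + 2)) +
          A i * Matrix.circulant (w (i + 2))) = (0 : Matrix (ZMod p) (ZMod p) R) ∧
        ∑ i : ZMod 3, (Qmat p (a i) (b i) (c i) * Matrix.circulant (u (i + 1)) +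
          A i * Matrix.circulant (w (i + 1))) = (0 : Matrix (ZMod p) (ZMod p) R)) := by
  have hd3 : ∀ d : ZMod 3, d = 0 ∨ d = 1 ∨ d = 2 := by decide
  constructor
  · rintro ⟨N, hN⟩
    -- shift invariance of the blocks
    have hAs : ∀ (i : ZMod 3) (g x y : ZMod p), A i (x + g) (y + g) = A i x y := by
      intro i g x y
      obtain ⟨v, hv⟩ := hA i
      rw [hv]; exact circulant_shift v g x y
    -- shift invariance of M
    have hMs : ∀ (g i : ZMod 3 × ZMod p) (k : (ZMod 3 × ZMod p) ⊕ (ZMod 3 × ZMod p)),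
        Mblk (fun i => Qmat p (a i) (b i) (c i)) A (i + g) (Sum.map (· + g) (· + g) k)
          = Mblk (fun i => Qmat p (a i) (b i) (c i)) A i k := by
      rintro ⟨g1, g2⟩ ⟨i1, i2⟩ (⟨k1, k2⟩ | ⟨k1, k2⟩)
      · simp only [Mblk, Sum.map_inl, Matrix.fromCols_apply_inl, blockCirc, of_apply,
          Prod.mk_add_mk, add_sub_add_right_eq_sub]
        exact Qmat_shift _ _ _ g2 i2 k2
      · simp only [Mblk, Sum.map_inr, Matrix.fromCols_apply_inr, blockCirc, of_apply,
          Prod.mk_add_mk, add_sub_add_right_eq_sub]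
        exact hAs _ g2 i2 k2
    -- the averaged right inverse
    set N' : Matrix ((ZMod 3 × ZMod p) ⊕ (ZMod 3 × ZMod p)) (ZMod 3 × ZMod p) R :=
      Matrix.of fun k j => ∑ g : ZMod 3 × ZMod p, N (Sum.map (· + g) (· + g) k) (j + g)
      with hN'def
    have hcast : ((3 * p : ℕ) : R) = 1 := by
      obtain ⟨k, hk⟩ := (by decide : Odd 3).mul hodd
      have h2 : (2 : R) = 0 := by exact_mod_cast (CharP.cast_eq_zero R 2)
      rw [hk]; push_cast; rw [h2]; ring
    have key : Mblk (fun i => Qmat p (a i) (b i) (c i)) A * N' = 1 := by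
      ext i j
      rw [Matrix.mul_apply]
      simp only [hN'def, of_apply]
      simp_rw [Finset.mul_sum]
      rw [Finset.sum_comm]
      have step : ∀ g : ZMod 3 × ZMod p,
          ∑ k, Mblk (fun i => Qmat p (a i) (b i) (c i)) A i k *
              N (Sum.map (· + g) (· + g) k) (j + g)
            = (Mblk (fun i => Qmat p (a i) (b i) (c i)) A * N) (i + g) (j + g) := by
        intro g
        rw [Matrix.mul_apply]
        refine Fintype.sum_equiv (Equiv.sumCongr (Equiv.addRight g) (Equiv.addRight g))
          _ _ fun k => ?_
        have h1 : (Equiv.sumCongr (Equiv.addRight g) (Equiv.addRight g)) k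
            = Sum.map (· + g) (· + g) k := by cases k <;> rfl
        rw [h1, hMs g i k]
      simp_rw [step, hN, Matrix.one_apply, add_left_inj]
      rw [Finset.sum_const, Finset.card_univ]
      have hcard : Fintype.card (ZMod 3 × ZMod p) = 3 * p := by
        simp [ZMod.card]
      rw [hcard, nsmul_eq_mul, hcast, one_mul]
    -- shift invariance of N'
    have hN's : ∀ (h k0 : ZMod 3 × ZMod p) (k : (ZMod 3 × ZMod p) ⊕ (ZMod 3 × ZMod p))
        (j : ZMod 3 × ZMod p),
        N' (Sum.map (· + h) (· + h) k) (j + h) = N' k j := by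
      intro h _ k j
      simp only [hN'def, of_apply]
      refine Fintype.sum_equiv (Equiv.addLeft h) _ _ fun g => ?_
      cases k <;>
        · simp only [Sum.map_inl, Sum.map_inr, Equiv.coe_addLeft]
          rw [add_assoc, add_assoc]
    set u : ZMod 3 → ZMod p → R := fun d t => N' (Sum.inl (0, t)) (d, 0) with hu
    set w : ZMod 3 → ZMod p → R := fun d t => N' (Sum.inr (0, t)) (d, 0) with hw
    have htop : ∀ (k1 : ZMod 3) (x : ZMod p) (j1 : ZMod 3) (y : ZMod p),
        N' (Sum.inl (k1, x)) (j1, y) = u (j1 - k1) (x - y) := by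
      intro k1 x j1 y
      have := hN's (k1, y) (k1, y) (Sum.inl (0, x - y)) (j1 - k1, 0)
      simp only [Sum.map_inl, Prod.mk_add_mk, zero_add, sub_add_cancel] at this
      exact this
    have hbot : ∀ (k1 : ZMod 3) (x : ZMod p) (j1 : ZMod 3) (y : ZMod p),
        N' (Sum.inr (k1, x)) (j1, y) = w (j1 - k1) (x - y) := by
      intro k1 x j1 y
      have := hN's (k1, y) (k1, y) (Sum.inr (0, x - y)) (j1 - k1, 0)
      simp only [Sum.map_inr, Prod.mk_add_mk, zero_add, sub_add_cancel] at this
      exact this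
    have hsplit : N' = Matrix.fromRows (blockCirc fun d => Matrix.circulant (u d))
        (blockCirc fun d => Matrix.circulant (w d)) := by
      ext k ⟨j1, y⟩
      rcases k with ⟨k1, x⟩ | ⟨k1, x⟩
      · rw [Matrix.fromRows_apply_inl]
        simp only [blockCirc, of_apply, Matrix.circulant_apply]
        exact htop k1 x j1 y
      · rw [Matrix.fromRows_apply_inr]
        simp only [blockCirc, of_apply, Matrix.circulant_apply]
        exact hbot k1 x j1 y
    rw [hsplit, Mblk, Matrix.fromCols_mul_fromRows, blockCirc_mul, blockCirc_mul,
      blockCirc_add, ← blockCirc_one] at key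
    have hfun := blockCirc_ext key
    refine ⟨fun i => u (-i), fun i => w (-i), ?_, ?_, ?_⟩
    · have h0 := congrFun hfun 0
      simp only [zero_sub, if_pos rfl] at h0
      rw [Finset.sum_add_distrib]
      simpa using h0
    · have h1 := congrFun hfun 1
      rw [if_neg (by decide)] at h1
      have e2 : ∀ i : ZMod 3, -(i + 2) = 1 - i := by decide
      simp only [e2]
      rw [Finset.sum_add_distrib]
      simpa using h1
    · have h2 := congrFun hfun 2
      rw [if_neg (by decide)] at h2
      have e1 : ∀ i : ZMod 3, -(i + 1) = 2 - i := by decide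
      simp only [e1]
      rw [Finset.sum_add_distrib]
      simpa using h2
  · rintro ⟨u, w, h1, h2, h3⟩
    refine ⟨Matrix.fromRows (blockCirc fun d => Matrix.circulant (u (-d)))
      (blockCirc fun d => Matrix.circulant (w (-d))), ?_⟩
    rw [Mblk, Matrix.fromCols_mul_fromRows, blockCirc_mul, blockCirc_mul,
      blockCirc_add, ← blockCirc_one]
    refine congrArg blockCirc (funext fun d => ?_)
    rw [← Finset.sum_add_distrib]
    rcases hd3 d with rfl | rfl | rfl
    · rw [if_pos rfl]
      simpa using h1
    · rw [if_neg (by decide)]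
      have e2 : ∀ i : ZMod 3, -((1 : ZMod 3) - i) = i + 2 := by decide
      simpa [e2] using h2
    · rw [if_neg (by decide)]
      have e1 : ∀ i : ZMod 3, -((2 : ZMod 3) - i) = i + 1 := by decide
      simpa [e1] using h3
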